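/- Let φ(x,ξ) be a finite fractional power series φ(x,ξ) = Σ_{k=1}^{K−1} a_k x^{1−k/m} + ξ x^{1−K/m} and suppose f(x, φ(x,ξ)) = f_φ(ξ) + lower order terms in x with f_φ : ℂ → ℂ² a polynomial map of positive degree. Then f_φ(ℂ) ⊆ A_f. -/

import Mathlib

open MvPolynomial Filter

/-- Let `φ(x,ξ) = Σ_{k=1}^{K−1} a_k x^{1−k/m} + ξ x^{1−K/m}` be a finite
fractional power series (written via the substitution `x = t^{−m}`, `t → 0`), and
suppose `f(x, φ(x,ξ)) = f_φ(ξ) + (lower order terms in x)` with `f_φ = (p_φ, q_φ)` a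
polynomial map of positive degree. Then `f_φ(ℂ) ⊆ A_f`, the non-proper value set. -/
theorem stmt_11 (P Q : MvPolynomial (Fin 2) ℂ)
    (hdom : Dense (Set.range fun z : ℂ × ℂ => (eval ![z.1, z.2] P, eval ![z.1, z.2] Q)))
    (m K : ℕ) (hm : 0 < m) (a : ℕ → ℂ)
    (pφ qφ : Polynomial ℂ) (hdegφ : 0 < max pφ.natDegree qφ.natDegree)
    (hlim : ∀ ξ : ℂ, Tendsto (fun t : ℂ =>
        (eval ![t ^ (-(m : ℤ)),
              (∑ k ∈ Finset.Icc 1 (K - 1), a k * t ^ ((k : ℤ) - (m : ℤ)))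
                + ξ * t ^ ((K : ℤ) - (m : ℤ))] P,
         eval ![t ^ (-(m : ℤ)),
              (∑ k ∈ Finset.Icc 1 (K - 1), a k * t ^ ((k : ℤ) - (m : ℤ)))
                + ξ * t ^ ((K : ℤ) - (m : ℤ))] Q))
      (nhdsWithin 0 {0}ᶜ) (nhds (pφ.eval ξ, qφ.eval ξ))) :
    ∀ ξ : ℂ, (pφ.eval ξ, qφ.eval ξ) ∈ {v : ℂ × ℂ | ∃ s : ℕ → ℂ × ℂ,
      Tendsto (fun i => ‖s i‖) atTop atTop ∧
      Tendsto (fun i => (eval ![(s i).1, (s i).2] P, eval ![(s i).1, (s i).2] Q))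
        atTop (nhds v)} := by
  intro ξ
  -- the parameter sequence t i = 1/(i+1)
  set t : ℕ → ℂ := fun i => ((i : ℂ) + 1)⁻¹ with ht
  have htne : ∀ i, t i ≠ 0 := by
    intro i
    simp only [ht, ne_eq, inv_eq_zero]
    exact Nat.cast_add_one_ne_zero i
  -- t tends to 0 within {0}ᶜ
  have htlim : Tendsto t (atTop) (nhdsWithin 0 {0}ᶜ) := by
    apply tendsto_nhdsWithin_of_tendsto_nhds_of_eventually_within
    · rw [tendsto_zero_iff_norm_tendsto_zero]
      have : (fun i : ℕ => ‖t i‖) = fun i : ℕ => ((i : ℝ) + 1)⁻¹ := by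
        funext i
        rw [show t i = (((i + 1 : ℕ) : ℂ))⁻¹ by push_cast [ht]; ring,
          norm_inv, Complex.norm_natCast]
        push_cast; ring
      rw [this]
      simpa using tendsto_one_div_add_atTop_nhds_zero_nat (𝕜 := ℝ)
    · exact Eventually.of_forall fun i => htne i
  refine ⟨fun i => ((t i) ^ (-(m : ℤ)),
      (∑ k ∈ Finset.Icc 1 (K - 1), a k * (t i) ^ ((k : ℤ) - (m : ℤ)))
        + ξ * (t i) ^ ((K : ℤ) - (m : ℤ))), ?_, ?_⟩
  · -- norms tend to infinity
    have h1 : Tendsto (fun i : ℕ => ‖(t i) ^ (-(m : ℤ))‖) atTop atTop := by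
      have heq : (fun i : ℕ => ‖(t i) ^ (-(m : ℤ))‖) = fun i : ℕ => ((i : ℝ) + 1) ^ m := by
        funext i
        rw [norm_zpow, show t i = (((i + 1 : ℕ) : ℂ))⁻¹ by push_cast [ht]; ring,
          norm_inv, Complex.norm_natCast, inv_zpow, ← zpow_neg, neg_neg, zpow_natCast]
        push_cast; ring
      rw [heq]
      have h2 : Tendsto (fun i : ℕ => (i : ℝ) + 1) atTop atTop :=
        tendsto_atTop_add_const_right _ 1 tendsto_natCast_atTop_atTop
      exact (tendsto_pow_atTop hm.ne').comp h2
    refine tendsto_atTop_mono (fun i => ?_) h1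
    exact norm_fst_le (_, _)
  · exact (hlim ξ).comp htlim
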